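/- arXiv:1808.06411 — 4 statements merged into one kernel-verified Lean document; each statement's English description precedes it below -/
import Mathlib

section
/- Let n ≥ 1 be a natural number, β a type, and f : ZMod n → β a function whose image contains at least two distinct values. Then the number of indices i ∈ ZMod n with f(i) ≠ f(i+1) is at least the number of distinct values in the image of f. (Any assignment of blocks to the nodes of a cycle that uses t ≥ 2 distinct blocks cuts at least t edges of the cycle.) -/
/-- Any assignment of blocks to the nodes of a cycle of length `n ≥ 1` that uses
at least two distinct blocks cuts at least as many cycle edges as there are
distinct blocks: the number of indices `i ∈ ZMod n` with `f i ≠ f (i+1)` is at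
least the number of distinct values in the image of `f`. -/
theorem cycle_cut_bound (n : ℕ) (hn : 1 ≤ n) {β : Type*} (f : ZMod n → β)
    (htwo : 2 ≤ (Set.range f).ncard) :
    (Set.range f).ncard ≤ {i : ZMod n | f i ≠ f (i + 1)}.ncard := by
  haveI : NeZero n := ⟨by omega⟩
  have key : ∀ b ∈ Set.range f, ∃ i, f i = b ∧ f i ≠ f (i + 1) := by
    rintro b ⟨i0, rfl⟩
    by_contra h
    push_neg at h
    have hconst : ∀ k : ℕ, f (i0 + (k : ZMod n)) = f i0 := by
      intro k
      induction k with
      | zero => simp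
      | succ k ih =>
        have h2 := h _ ih
        have : i0 + ((k + 1 : ℕ) : ZMod n) = i0 + (k : ZMod n) + 1 := by
          push_cast; ring
        rw [this, ← h2, ih]
    have hall : ∀ j, f j = f i0 := by
      intro j
      have : j = i0 + (((j - i0).val : ℕ) : ZMod n) := by
        rw [ZMod.natCast_val, ZMod.cast_id]; ring
      rw [this]; exact hconst _
    have hrng : Set.range f = {f i0} := by
      ext b
      constructor
      · rintro ⟨j, rfl⟩; exact hall j
      · rintro rfl; exact ⟨i0, rfl⟩
    rw [hrng, Set.ncard_singleton] at htwo
    omega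
  have key' : ∀ b : β, ∃ i : ZMod n, b ∈ Set.range f → f i = b ∧ f i ≠ f (i + 1) := by
    intro b
    by_cases hb : b ∈ Set.range f
    · exact (key b hb).imp fun i hi _ => hi
    · exact ⟨0, fun h => absurd h hb⟩
  choose g hg using key'
  apply Set.ncard_le_ncard_of_injOn g
  · intro b hb; exact (hg b hb).2
  · intro a ha b hb hab
    rw [← (hg a ha).1, ← (hg b hb).1, hab]
end

section
/- Suppose π cuts no dominant edge, and let g be the induced edge partition. Then the vertex cut of g satisfies Σ_{v ∈ V} (|I(v)| − 1) ≤ |{auxiliary edges {(v,i),(v,i+1)} of the split graph whose two endpoints receive different blocks under π}|. In words: the number of node replicas of the induced edge partition is at most the number of auxiliary edges cut by the node partition of the split graph. -/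
open SimpleGraph

open SimpleGraph

lemma sum_ncard_le_ncard_iUnion' {ι α : Type*} [Fintype ι] (Q : ι → Set α)
    (hfin : ∀ i, (Q i).Finite) (hdisj : ∀ i j, i ≠ j → Disjoint (Q i) (Q j)) :
    ∑ i, (Q i).ncard ≤ (⋃ i, Q i).ncard := by
  classical
  have main : ∀ s : Finset ι, ∑ i ∈ s, (Q i).ncard = (⋃ i ∈ s, Q i).ncard := by
    intro s
    induction s using Finset.induction_on with
    | empty => simp
    | @insert a s ha ih =>
      have hdisj' : Disjoint (Q a) (⋃ i ∈ s, Q i) := by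
        rw [Set.disjoint_iUnion_right]
        intro i
        rw [Set.disjoint_iUnion_right]
        intro hi
        exact hdisj a i (fun h => ha (h ▸ hi))
      have hfin' : (⋃ i ∈ s, Q i).Finite := Set.Finite.biUnion s.finite_toSet fun i _ => hfin i
      rw [Finset.sum_insert ha, ih, ← Set.ncard_union_eq hdisj' (hfin a) hfin']
      congr 1
      simp [Set.iUnion_or, Set.iUnion_union_distrib]
  have h := main Finset.univ
  simp only [Finset.mem_univ, Set.iUnion_true] at h
  exact h.le

/-- Key combinatorial lemma: for a circular sequence of length `n ≥ 1`, the number of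
distinct values minus one is at most the number of "cut" auxiliary edges. -/
lemma key_circular {n k : ℕ} (hn : 0 < n) (f : ZMod n → Fin k) :
    (Set.range f).ncard - 1 ≤
      {p : Sym2 (ZMod n) | ∃ i : ZMod n, i ≠ i + 1 ∧ p = s(i, i + 1) ∧ f i ≠ f (i + 1)}.ncard := by
  haveI : NeZero n := ⟨hn.ne'⟩
  set P : Set (Sym2 (ZMod n)) :=
    {p : Sym2 (ZMod n) | ∃ i : ZMod n, i ≠ i + 1 ∧ p = s(i, i + 1) ∧ f i ≠ f (i + 1)} with hP
  by_cases hconst : ∀ i j : ZMod n, f i = f j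
  · have : Set.range f ⊆ {f 0} := by
      rintro x ⟨i, rfl⟩; exact hconst i 0
    have := Set.ncard_le_ncard this (Set.finite_singleton _)
    simp only [Set.ncard_singleton] at this
    omega
  -- f is not constant
  push_neg at hconst
  obtain ⟨a, b, hab⟩ := hconst
  -- every value in the range is attained at a "boundary" index
  have claimA : ∀ c ∈ Set.range f, ∃ j : ZMod n, f j = c ∧ f j ≠ f (j + 1) := by
    rintro c ⟨i, rfl⟩
    by_contra hcon
    push_neg at hcon
    have hstep : ∀ m : ℕ, f (i + m) = f i := by
      intro m
      induction m with
      | zero => simp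
      | succ m ih =>
        have hstep1 := hcon (i + (m : ZMod n)) ih
        have hcast : ((m + 1 : ℕ) : ZMod n) = (m : ZMod n) + 1 := by push_cast; ring
        rw [hcast, ← add_assoc, ← hstep1]
        exact ih
    have hall : ∀ x : ZMod n, f x = f i := by
      intro x
      obtain ⟨m, hm⟩ := (ZMod.natCast_rightInverse (n := n)).surjective (x - i)
      have : x = i + (m : ZMod n) := by rw [hm]; ring
      rw [this]; exact hstep m
    exact hab (by rw [hall a, hall b])
  set D : Set (ZMod n) := {i : ZMod n | f i ≠ f (i + 1)} with hD
  -- range f injects into D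
  have hrange_le : (Set.range f).ncard ≤ D.ncard := by
    choose j hj1 hj2 using claimA
    apply Set.ncard_le_ncard_of_injOn (fun c => if h : c ∈ Set.range f then j c h else a)
    · intro c hc
      simp only [hc, dif_pos]
      exact hj2 c hc
    · intro c hc c' hc' h
      simp only [hc, hc', dif_pos] at h
      rw [← hj1 c hc, ← hj1 c' hc', h]
  have hD_ne : D.Nonempty := by
    obtain ⟨j, _, hj2⟩ := claimA (f a) ⟨a, rfl⟩
    exact ⟨j, hj2⟩
  have hn2 : 2 ≤ n := by
    rcases Nat.lt_or_ge n 2 with h | h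
    · interval_cases n
      exact absurd (congrArg f (Subsingleton.elim a b)) hab
    · exact h
  by_cases hn3 : n = 2
  · -- n = 2 : at most one auxiliary edge, but range has at most 2 values
    subst hn3
    have h1 : (Set.range f).ncard ≤ 2 := by
      have : (Set.range f).ncard ≤ (Set.univ : Set (ZMod 2)).ncard := by
        rw [← Set.image_univ]
        exact Set.ncard_image_le (Set.toFinite _)
      simpa [Set.ncard_univ, Nat.card_eq_fintype_card, ZMod.card] using this
    have h2 : 1 ≤ P.ncard := by
      obtain ⟨j, hj⟩ := hD_ne
      have hjne : j ≠ j + 1 := fun h => hj (by rw [← h])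
      have : s(j, j + 1) ∈ P := ⟨j, hjne, rfl, hj⟩
      have := Set.ncard_le_ncard (Set.singleton_subset_iff.mpr this) (Set.toFinite P)
      simpa using this
    omega
  · -- n ≥ 3 : i ↦ s(i, i+1) is injective on D
    have hn3' : 3 ≤ n := by omega
    have hDP : D.ncard ≤ P.ncard := by
      apply Set.ncard_le_ncard_of_injOn (fun i => s(i, i + 1))
      · intro i hi
        exact ⟨i, fun h => hi (by rw [← h]), rfl, hi⟩
      · intro i _ j _ h
        rw [Sym2.eq_iff] at h
        rcases h with ⟨h1, _⟩ | ⟨h1, h2⟩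
        · exact h1
        · exfalso
          have hii : i = i + 2 := by linear_combination h1 - h2
          have h2z : ((2 : ℕ) : ZMod n) = 0 := by
            push_cast
            linear_combination -hii
          rw [ZMod.natCast_eq_zero_iff] at h2z
          have := Nat.le_of_dvd (by omega) h2z
          omega
    omega

/-- If a `k`-way node partition `π` of the SPAC split graph of `G` cuts no dominant
edge and `g` is the induced edge partition, then the vertex cut of `g`, i.e. the
number of node replicas `Σ_{v ∈ V} (|I(v)| − 1)`, is at most the number of
auxiliary edges of the split graph cut by `π`. -/
theorem vertex_cut_le_cut_auxiliary_edges
    {V : Type*} [Fintype V] [DecidableEq V] (G : SimpleGraph V) [DecidableRel G.Adj]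
    (e : ∀ v : V, ZMod (G.degree v) ≃ G.neighborSet v) {k : ℕ}
    (π : (Σ v : V, ZMod (G.degree v)) → Fin k)
    (hNoCut : ∀ u v (h : G.Adj u v),
      π ⟨u, (e u).symm ⟨v, h⟩⟩ = π ⟨v, (e v).symm ⟨u, h.symm⟩⟩)
    (g : G.edgeSet → Fin k)
    (hg : ∀ u v (h : G.Adj u v),
      g ⟨s(u, v), (G.mem_edgeSet).mpr h⟩ = π ⟨u, (e u).symm ⟨v, h⟩⟩) :
    ∑ v : V, ((g '' {ed : G.edgeSet | v ∈ (ed : Sym2 V)}).ncard - 1) ≤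
      {p : Sym2 (Σ w : V, ZMod (G.degree w)) |
        ∃ (v : V) (i : ZMod (G.degree v)),
          (⟨v, i⟩ : Σ w : V, ZMod (G.degree w)) ≠ ⟨v, i + 1⟩ ∧
          p = s((⟨v, i⟩ : Σ w : V, ZMod (G.degree w)), ⟨v, i + 1⟩) ∧
          π ⟨v, i⟩ ≠ π ⟨v, i + 1⟩}.ncard := by
  classical
  have hd : ∀ v, 0 < G.degree v := by
    intro v
    rw [G.degree_pos_iff_exists_adj]
    exact ⟨e v 0, (e v 0).2⟩
  haveI : ∀ v, NeZero (G.degree v) := fun v => ⟨(hd v).ne'⟩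
  haveI : ∀ v, Fintype (ZMod (G.degree v)) := fun v => ZMod.fintype _
  set Q : V → Set (Sym2 (Σ w : V, ZMod (G.degree w))) := fun v =>
    {p | ∃ i : ZMod (G.degree v),
      (⟨v, i⟩ : Σ w : V, ZMod (G.degree w)) ≠ ⟨v, i + 1⟩ ∧
      p = s((⟨v, i⟩ : Σ w : V, ZMod (G.degree w)), ⟨v, i + 1⟩) ∧
      π ⟨v, i⟩ ≠ π ⟨v, i + 1⟩} with hQ
  have hA : {p : Sym2 (Σ w : V, ZMod (G.degree w)) |
        ∃ (v : V) (i : ZMod (G.degree v)),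
          (⟨v, i⟩ : Σ w : V, ZMod (G.degree w)) ≠ ⟨v, i + 1⟩ ∧
          p = s((⟨v, i⟩ : Σ w : V, ZMod (G.degree w)), ⟨v, i + 1⟩) ∧
          π ⟨v, i⟩ ≠ π ⟨v, i + 1⟩} = ⋃ v, Q v := by
    ext p
    simp only [hQ, Set.mem_setOf_eq, Set.mem_iUnion]
  rw [hA]
  have hdisj : ∀ v w : V, v ≠ w → Disjoint (Q v) (Q w) := by
    intro v w hvw
    rw [Set.disjoint_left]
    rintro p ⟨i, _, rfl, _⟩ ⟨j, _, heq, _⟩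
    rw [Sym2.eq_iff] at heq
    rcases heq with ⟨h1, _⟩ | ⟨h1, _⟩ <;> exact hvw (congrArg Sigma.fst h1)
  refine le_trans (Finset.sum_le_sum ?_) (sum_ncard_le_ncard_iUnion' Q (fun v => Set.toFinite _) hdisj)
  intro v _
  -- the image of incident edges equals the range of i ↦ π ⟨v, i⟩
  set f : ZMod (G.degree v) → Fin k := fun i => π ⟨v, i⟩ with hf
  have hIv : g '' {ed : G.edgeSet | v ∈ (ed : Sym2 V)} = Set.range f := by
    ext c
    constructor
    · rintro ⟨⟨ed, hed⟩, hv, rfl⟩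
      simp only [Set.mem_setOf_eq] at hv
      obtain ⟨u, rfl⟩ := Sym2.mem_iff_exists.mp hv
      have hadj : G.Adj v u := (G.mem_edgeSet).mp hed
      exact ⟨(e v).symm ⟨u, hadj⟩, (hg v u hadj).symm⟩
    · rintro ⟨i, rfl⟩
      have hadj : G.Adj v (e v i).1 := (e v i).2
      refine ⟨⟨s(v, (e v i).1), (G.mem_edgeSet).mpr hadj⟩,
        Sym2.mem_iff.mpr (Or.inl rfl), ?_⟩
      rw [hg v (e v i).1 hadj]
      have : (e v).symm ⟨(e v i).1, hadj⟩ = i := by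
        have h1 : (⟨(e v i).1, hadj⟩ : G.neighborSet v) = e v i := rfl
        rw [h1, Equiv.symm_apply_apply]
      rw [this]
  rw [hIv]
  -- Q v is the injective image of the corresponding set of Sym2 (ZMod (G.degree v))
  have hQvIm : Q v = Sym2.map (fun i : ZMod (G.degree v) => (⟨v, i⟩ : Σ w : V, ZMod (G.degree w))) ''
      {p : Sym2 (ZMod (G.degree v)) | ∃ i : ZMod (G.degree v),
        i ≠ i + 1 ∧ p = s(i, i + 1) ∧ f i ≠ f (i + 1)} := by
    ext p
    constructor
    · rintro ⟨i, hne, rfl, hpi⟩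
      refine ⟨s(i, i + 1), ⟨i, fun h => hne (by rw [← h]), rfl, hpi⟩, ?_⟩
      rw [Sym2.map_pair_eq]
    · rintro ⟨q, ⟨i, hne, rfl, hpi⟩, rfl⟩
      rw [Sym2.map_pair_eq]
      exact ⟨i, fun h => hne (@sigma_mk_injective V (fun w => ZMod (G.degree w)) v _ _ h), rfl, hpi⟩
  have hinj : Function.Injective (fun i : ZMod (G.degree v) => (⟨v, i⟩ : Σ w : V, ZMod (G.degree w))) :=
    fun a b h => @sigma_mk_injective V (fun w => ZMod (G.degree w)) v a b h
  rw [hQvIm, Set.ncard_image_of_injective _ (Sym2.map.injective hinj)]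
  exact key_circular (hd v) f
end

section
/- Suppose π cuts no dominant edge, and let g be the induced edge partition. Then for every block b ∈ Fin k, twice the number of edges of G assigned to block b by g equals the number of split nodes assigned to block b by π: 2 · |{e ∈ E : g(e) = b}| = |{x ∈ V' : π(x) = b}|. -/
open SimpleGraph

/-- If a `k`-way node partition `π` of the SPAC split graph of `G` cuts no dominant
edge and `g` is the induced edge partition, then for every block `b`, twice the
number of edges of `G` assigned to `b` by `g` equals the number of split nodes
assigned to `b` by `π`. -/
theorem two_mul_block_edges_eq_block_split_nodes
    {V : Type*} [Fintype V] [DecidableEq V] (G : SimpleGraph V) [DecidableRel G.Adj]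
    (e : ∀ v : V, ZMod (G.degree v) ≃ G.neighborSet v) {k : ℕ}
    (π : (Σ v : V, ZMod (G.degree v)) → Fin k)
    (hNoCut : ∀ u v (h : G.Adj u v),
      π ⟨u, (e u).symm ⟨v, h⟩⟩ = π ⟨v, (e v).symm ⟨u, h.symm⟩⟩)
    (g : G.edgeSet → Fin k)
    (hg : ∀ u v (h : G.Adj u v),
      g ⟨s(u, v), (G.mem_edgeSet).mpr h⟩ = π ⟨u, (e u).symm ⟨v, h⟩⟩) :
    ∀ b : Fin k,
      2 * {ed : G.edgeSet | g ed = b}.ncard =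
        {x : Σ w : V, ZMod (G.degree w) | π x = b}.ncard := by
  intro b
  haveI : ∀ v : V, Fintype (ZMod (G.degree v)) := fun v => Fintype.ofEquiv _ (e v).symm
  set f : (Σ v : V, ZMod (G.degree v)) → G.edgeSet :=
    fun x => ⟨s(x.1, (e x.1 x.2 : V)), (G.mem_edgeSet).mpr (e x.1 x.2).2⟩ with hf
  have key : ∀ x, g (f x) = π x := by
    rintro ⟨v, i⟩
    have h : G.Adj v (e v i : V) := (e v i).2
    have := hg v (e v i : V) h
    have h2 : (e v).symm ⟨(e v i : V), h⟩ = i := by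
      rw [show (⟨(e v i : V), h⟩ : G.neighborSet v) = e v i from Subtype.ext rfl]
      exact (e v).symm_apply_apply i
    rw [h2] at this
    exact this
  have fiber : ∀ ed : G.edgeSet, g ed = b →
      (Finset.univ.filter (fun x => π x = b ∧ f x = ed)).card = 2 := by
    rintro ⟨E, hE⟩ hgb
    induction E using Sym2.ind with
    | _ u v =>
      rw [G.mem_edgeSet] at hE
      set x1 : Σ w : V, ZMod (G.degree w) := ⟨u, (e u).symm ⟨v, hE⟩⟩
      set x2 : Σ w : V, ZMod (G.degree w) := ⟨v, (e v).symm ⟨u, hE.symm⟩⟩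
      have hfx1 : f x1 = ⟨s(u, v), hE⟩ := by
        apply Subtype.ext
        show s(u, ((e u) ((e u).symm ⟨v, hE⟩) : V)) = s(u, v)
        rw [(e u).apply_symm_apply]
      have hfx2 : f x2 = ⟨s(u, v), hE⟩ := by
        apply Subtype.ext
        show s(v, ((e v) ((e v).symm ⟨u, hE.symm⟩) : V)) = s(u, v)
        rw [(e v).apply_symm_apply]
        exact Sym2.eq_swap
      have hfilter : Finset.univ.filter (fun x => π x = b ∧ f x = (⟨s(u,v), hE⟩ : G.edgeSet))
          = {x1, x2} := by
        ext x
        simp only [Finset.mem_filter, Finset.mem_univ, true_and, Finset.mem_insert,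
          Finset.mem_singleton]
        constructor
        · rintro ⟨-, hx⟩
          obtain ⟨w, i⟩ := x
          have hsym : s(w, ((e w i : G.neighborSet w) : V)) = s(u, v) := congrArg Subtype.val hx
          rw [Sym2.eq_iff] at hsym
          rcases hsym with ⟨rfl, h2⟩ | ⟨rfl, h2⟩
          · left
            have : (e w) i = ⟨v, hE⟩ := Subtype.ext h2
            have : i = (e w).symm ⟨v, hE⟩ := by rw [← this, (e w).symm_apply_apply]
            simp [x1, this]
          · right
            have : (e w) i = ⟨u, hE.symm⟩ := Subtype.ext h2
            have : i = (e w).symm ⟨u, hE.symm⟩ := by rw [← this, (e w).symm_apply_apply]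
            simp [x2, this]
        · rintro (rfl | rfl)
          · exact ⟨by rw [← key x1, hfx1]; exact hgb, hfx1⟩
          · exact ⟨by rw [← key x2, hfx2]; exact hgb, hfx2⟩
      rw [hfilter]
      rw [Finset.card_insert_of_notMem, Finset.card_singleton]
      simp only [Finset.mem_singleton]
      intro hcon
      exact hE.ne (congrArg Sigma.fst hcon)
  have hT : ({x : Σ w : V, ZMod (G.degree w) | π x = b}).ncard
      = (Finset.univ.filter (fun x => π x = b)).card := by
    rw [Set.ncard_eq_toFinset_card']
    congr 1
    ext x
    simp
  have hS : ({ed : G.edgeSet | g ed = b}).ncard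
      = (Finset.univ.filter (fun ed => g ed = b)).card := by
    rw [Set.ncard_eq_toFinset_card']
    congr 1
    ext x
    simp
  rw [hT, hS]
  rw [Finset.card_eq_sum_card_fiberwise (f := f)
    (t := Finset.univ.filter (fun ed => g ed = b))
    (fun x hx => by
      simp only [Finset.mem_coe, Finset.mem_filter, Finset.mem_univ, true_and] at hx ⊢
      rw [key]; exact hx)]
  have hsum : ∑ ed ∈ Finset.univ.filter (fun ed => g ed = b),
      (((Finset.univ.filter (fun x => π x = b)).filter (fun x => f x = ed))).card
      = ∑ _ed ∈ Finset.univ.filter (fun ed => g ed = b), 2 :=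
    Finset.sum_congr rfl (fun ed hed => by
      simp only [Finset.mem_filter, Finset.mem_univ, true_and] at hed
      rw [Finset.filter_filter]
      exact fiber ed hed)
  rw [hsum, Finset.sum_const, smul_eq_mul, mul_comm]
end

section
/- Suppose π cuts no dominant edge, let g be the induced edge partition, let m = |E|, and suppose π satisfies the node balance constraint |{x ∈ V' : π(x) = b}| ≤ (1+ε)·⌈2m/k⌉ for every block b ∈ Fin k, where ε ≥ 0 is a real number. Then the induced edge partition satisfies |{e ∈ E : g(e) = b}| ≤ (1+ε)·⌈2m/k⌉ / 2 for every block b ∈ Fin k. -/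
open SimpleGraph

/-- If a `k`-way node partition `π` of the SPAC split graph of `G` cuts no dominant
edge, `g` is the induced edge partition, `m = |E|`, and `π` satisfies the node
balance constraint `|{x : π x = b}| ≤ (1+ε)·⌈2m/k⌉` for every block `b` (split
nodes have unit weight), then the induced edge partition satisfies
`|{e : g e = b}| ≤ (1+ε)·⌈2m/k⌉ / 2` for every block `b`. -/
theorem induced_edge_partition_balanced
    {V : Type*} [Fintype V] [DecidableEq V] (G : SimpleGraph V) [DecidableRel G.Adj]
    (e : ∀ v : V, ZMod (G.degree v) ≃ G.neighborSet v) {k : ℕ}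
    (π : (Σ v : V, ZMod (G.degree v)) → Fin k)
    (hNoCut : ∀ u v (h : G.Adj u v),
      π ⟨u, (e u).symm ⟨v, h⟩⟩ = π ⟨v, (e v).symm ⟨u, h.symm⟩⟩)
    (g : G.edgeSet → Fin k)
    (hg : ∀ u v (h : G.Adj u v),
      g ⟨s(u, v), (G.mem_edgeSet).mpr h⟩ = π ⟨u, (e u).symm ⟨v, h⟩⟩)
    (m : ℕ) (hm : m = G.edgeSet.ncard)
    (ε : ℝ) (hε : 0 ≤ ε)
    (hbal : ∀ b : Fin k,
      ({x : Σ w : V, ZMod (G.degree w) | π x = b}.ncard : ℝ) ≤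
        (1 + ε) * ((⌈(2 * (m : ℝ)) / (k : ℝ)⌉ : ℤ) : ℝ)) :
    ∀ b : Fin k,
      ({ed : G.edgeSet | g ed = b}.ncard : ℝ) ≤
        (1 + ε) * ((⌈(2 * (m : ℝ)) / (k : ℝ)⌉ : ℤ) : ℝ) / 2 := by
  intro b
  have hfin : Finite (Σ v : V, ZMod (G.degree v)) :=
    Finite.of_equiv _ (Equiv.sigmaCongrRight fun v => (e v).symm)
  -- edge determined by node
  set E2 : (Σ v : V, ZMod (G.degree v)) → Sym2 V := fun x => s(x.1, (e x.1 x.2 : V)) with hE2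
  -- for an edge ed, get endpoints
  have key : 2 * ({ed : G.edgeSet | g ed = b}.ncard) ≤
      ({x : Σ w : V, ZMod (G.degree w) | π x = b}.ncard) := by
    classical
    set A := {ed : G.edgeSet | g ed = b}
    set B := {x : Σ w : V, ZMod (G.degree w) | π x = b}
    have hadj : ∀ ed : G.edgeSet, G.Adj ed.1.out.1 ed.1.out.2 := by
      intro ed
      have : s(ed.1.out.1, ed.1.out.2) ∈ G.edgeSet := by
        have := ed.2
        rwa [show s(ed.1.out.1, ed.1.out.2) = ed.1 from ed.1.out_eq]
      exact (G.mem_edgeSet).mp this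
    have hmk : ∀ ed : G.edgeSet,
        (⟨s(ed.1.out.1, ed.1.out.2), (G.mem_edgeSet).mpr (hadj ed)⟩ : G.edgeSet) = ed := by
      intro ed; exact Subtype.ext ed.1.out_eq
    let f : A × Bool → B := fun p =>
      let ed := p.1.1
      let u := ed.1.out.1
      let v := ed.1.out.2
      let h := hadj ed
      if p.2 then
        ⟨⟨u, (e u).symm ⟨v, h⟩⟩, by
          have h1 := hg u v h
          rw [hmk ed] at h1
          exact (h1.symm.trans p.1.2 : _)⟩
      else
        ⟨⟨v, (e v).symm ⟨u, h.symm⟩⟩, by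
          have h1 := hg u v h
          rw [hmk ed] at h1
          exact ((hNoCut u v h).symm.trans (h1.symm.trans p.1.2) : _)⟩
    have hE2f : ∀ p : A × Bool, E2 (f p).1 = p.1.1.1 := by
      rintro ⟨⟨ed, hed⟩, c⟩
      cases c <;>
        · simp only [f, E2, if_true, if_false, Bool.false_eq_true, Equiv.apply_symm_apply]
          rw [Sym2.eq_swap] <;> try skip
          first
            | exact ed.1.out_eq
            | (rw [← Sym2.eq_swap]; exact ed.1.out_eq)
    have hfst : ∀ p : A × Bool, (f p).1.1 = if p.2 then p.1.1.1.out.1 else p.1.1.1.out.2 := by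
      rintro ⟨⟨ed, hed⟩, c⟩; cases c <;> rfl
    have finj : Function.Injective f := by
      rintro ⟨⟨ed, hed⟩, c⟩ ⟨⟨ed', hed'⟩, c'⟩ hpq
      have hed_eq : ed = ed' := by
        have h1 := hE2f (⟨⟨ed, hed⟩, c⟩ : A × Bool)
        have h2 := hE2f (⟨⟨ed', hed'⟩, c'⟩ : A × Bool)
        rw [hpq] at h1
        exact Subtype.ext (h1.symm.trans h2)
      subst hed_eq
      have hne : ed.1.out.1 ≠ ed.1.out.2 := (hadj ed).ne
      have hc : c = c' := by
        have h1 := hfst (⟨⟨ed, hed⟩, c⟩ : A × Bool)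
        have h2 := hfst (⟨⟨ed, hed'⟩, c'⟩ : A × Bool)
        rw [hpq] at h1
        have h3 : (if c then ed.1.out.1 else ed.1.out.2)
            = (if c' then ed.1.out.1 else ed.1.out.2) := h1.symm.trans h2
        cases c <;> cases c' <;> simp_all
      subst hc
      rfl
    have hcard : Nat.card (A × Bool) ≤ Nat.card B := by
      have : Finite B := Subtype.finite
      exact Nat.card_le_card_of_injective f finj
    rw [Nat.card_prod, show Nat.card Bool = 2 from by simp [Nat.card_eq_fintype_card]] at hcard
    have hA : A.ncard = Nat.card A := rfl
    have hB : B.ncard = Nat.card B := rfl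
    omega
  have hb := hbal b
  have : (2 * ({ed : G.edgeSet | g ed = b}.ncard) : ℝ) ≤
      (1 + ε) * ((⌈(2 * (m : ℝ)) / (k : ℝ)⌉ : ℤ) : ℝ) := by
    calc (2 * ({ed : G.edgeSet | g ed = b}.ncard) : ℝ)
        ≤ ({x : Σ w : V, ZMod (G.degree w) | π x = b}.ncard : ℝ) := by exact_mod_cast key
      _ ≤ _ := hb
  linarith
end
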